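/- For almost every t ∈ ℝ: for every ε > 0 there exists N₀ such that for every integer N ≥ N₀ there exist integers a and q with N ≤ q ≤ N^{1+ε} and |t/(2π) − a/q| ≤ 1/q². -/

import Mathlib

open Filter MeasureTheory
open Metric

noncomputable def badSet (n : ℤ) (j m : ℕ) : Set ℝ :=
  ⋃ q ∈ Finset.Ico (1 : ℤ) (2 ^ (j * m)), ⋃ a ∈ Finset.Icc (n * q - 1) ((n + 1) * q + 1),
    closedBall ((a : ℝ) / (q : ℝ)) (1 / ((q : ℝ) * ((2 : ℝ) ^ (j * m + m + 1) + 1)))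

lemma badSet_volume (n : ℤ) (j m : ℕ) :
    volume (badSet n j m) ≤ ENNReal.ofReal (4 * (1 / 2) ^ m) := by
  set Q : ℝ := (2 : ℝ) ^ (j * m + m + 1) with hQdef
  have hQ0 : (0:ℝ) < Q := by positivity
  have key : ∀ q : ℤ, q ∈ Finset.Ico (1 : ℤ) (2 ^ (j * m)) →
      ∑ a ∈ Finset.Icc (n * q - 1) ((n + 1) * q + 1),
        volume (closedBall ((a : ℝ) / (q : ℝ)) (1 / ((q : ℝ) * (Q + 1))))
        ≤ ENNReal.ofReal (8 / (Q + 1)) := by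
    intro q hq
    rw [Finset.mem_Ico] at hq
    have hq1 : (1:ℝ) ≤ (q:ℝ) := by exact_mod_cast hq.1
    have hq0 : (0:ℝ) < q := by linarith
    have hcard : (Finset.Icc (n * q - 1) ((n + 1) * q + 1)).card = (q + 3).toNat := by
      rw [Int.card_Icc]; congr 1; ring
    calc ∑ a ∈ Finset.Icc (n * q - 1) ((n + 1) * q + 1),
          volume (closedBall ((a : ℝ) / (q : ℝ)) (1 / ((q : ℝ) * (Q + 1))))
        = (q+3).toNat • ENNReal.ofReal (2 * (1 / ((q : ℝ) * (Q + 1)))) := by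
          rw [← hcard, ← Finset.sum_const]
          exact Finset.sum_congr rfl fun a _ => Real.volume_closedBall _ _
      _ = ENNReal.ofReal (((q:ℝ)+3) * (2 * (1 / ((q : ℝ) * (Q + 1))))) := by
          have hc : (((q+3).toNat : ℕ) : ℝ) = (q:ℝ) + 3 := by
            rw [← Int.cast_natCast, Int.toNat_of_nonneg (by linarith [hq.1])]
            push_cast; ring
          rw [nsmul_eq_mul, ← ENNReal.ofReal_natCast, ← ENNReal.ofReal_mul (by positivity), hc]
      _ ≤ ENNReal.ofReal (8 / (Q + 1)) := by
          apply ENNReal.ofReal_le_ofReal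
          have h1 : ((q:ℝ)+3) * (2 * (1 / ((q : ℝ) * (Q + 1)))) = (2*((q:ℝ)+3)) / ((q:ℝ) * (Q + 1)) := by
            field_simp
          rw [h1, div_le_div_iff₀ (by positivity) (by positivity)]
          nlinarith [hQ0]
  have hcard2 : (Finset.Ico (1 : ℤ) (2 ^ (j * m))).card ≤ 2 ^ (j * m) := by
    rw [Int.card_Ico, Int.toNat_le]
    push_cast
    exact sub_le_self _ zero_le_one
  calc volume (badSet n j m)
      ≤ ∑ q ∈ Finset.Ico (1 : ℤ) (2 ^ (j * m)),
          volume (⋃ a ∈ Finset.Icc (n * q - 1) ((n + 1) * q + 1),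
            closedBall ((a : ℝ) / (q : ℝ)) (1 / ((q : ℝ) * (Q + 1)))) :=
        measure_biUnion_finset_le _ _
    _ ≤ ∑ q ∈ Finset.Ico (1 : ℤ) (2 ^ (j * m)), ENNReal.ofReal (8 / (Q + 1)) := by
        refine Finset.sum_le_sum fun q hq => le_trans (measure_biUnion_finset_le _ _) (key q hq)
    _ = (Finset.Ico (1 : ℤ) (2 ^ (j * m))).card • ENNReal.ofReal (8 / (Q + 1)) := by
        rw [Finset.sum_const]
    _ ≤ (2 ^ (j * m) : ℕ) • ENNReal.ofReal (8 / (Q + 1)) := by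
        rw [nsmul_eq_mul, nsmul_eq_mul]
        gcongr
    _ = ENNReal.ofReal ((2:ℝ) ^ (j * m) * (8 / (Q + 1))) := by
        rw [nsmul_eq_mul, ← ENNReal.ofReal_natCast, ← ENNReal.ofReal_mul (by positivity)]
        push_cast; ring_nf
    _ ≤ ENNReal.ofReal (4 * (1 / 2) ^ m) := by
        apply ENNReal.ofReal_le_ofReal
        have hQval : Q = 2 ^ (j * m) * 2 ^ m * 2 := by
          rw [hQdef, pow_add, pow_add, pow_one]
        have h1 : ((1:ℝ)/2) ^ m * 2 ^ m = 1 := by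
          rw [← mul_pow]; norm_num
        have hp1 : (0:ℝ) < 2 ^ (j*m) := by positivity
        have hp2 : (0:ℝ) < (2:ℝ) ^ m := by positivity
        rw [mul_div_assoc', div_le_iff₀ (by positivity)]
        nlinarith [h1, hp1, hp2, hQval]

lemma badSet_ae (n : ℤ) (j : ℕ) : ∀ᵐ x : ℝ, ∀ᶠ m in atTop, x ∉ badSet n j m := by
  apply ae_eventually_notMem
  have hsum : Summable (fun m : ℕ => 4 * (1/2:ℝ)^m) :=
    (summable_geometric_of_lt_one (by norm_num) (by norm_num)).mul_left 4
  have h := ENNReal.ofReal_tsum_of_nonneg (fun m : ℕ => by positivity) hsum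
  refine ne_top_of_le_ne_top ?_ (ENNReal.tsum_le_tsum (fun m => badSet_volume n j m))
  rw [← h]
  exact ENNReal.ofReal_ne_top

lemma good_of_not_bad {x : ℝ} {n : ℤ} (hx1 : (n:ℝ) ≤ x) (hx2 : x < (n:ℝ) + 1) (j m : ℕ)
    (h : x ∉ badSet n j m) :
    ∃ a q : ℤ, ((2:ℝ) ^ (j*m)) ≤ (q:ℝ) ∧ (q:ℝ) ≤ (2:ℝ) ^ (j*m+m+1) ∧
      |x - (a:ℝ)/(q:ℝ)| ≤ 1 / (q:ℝ)^2 := by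
  obtain ⟨a, q, hq0, hqle, happrox⟩ := Real.exists_int_int_abs_mul_sub_le x
    (n := 2 ^ (j*m+m+1)) (pow_pos two_pos _)
  push_cast at happrox hqle
  -- happrox : |q*x - a| ≤ 1/(2^(j*m+m+1) + 1), hqle : (q:ℤ) ≤ 2^(j*m+m+1)
  have hq0' : (0:ℝ) < q := by exact_mod_cast hq0
  have hqleR : (q:ℝ) ≤ (2:ℝ) ^ (j*m+m+1) := by exact_mod_cast hqle
  have hQ1 : (0:ℝ) < (2:ℝ)^(j*m+m+1) + 1 := by positivity
  have happ : |x - (a:ℝ)/q| ≤ 1 / ((q:ℝ) * ((2:ℝ)^(j*m+m+1) + 1)) := by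
    have heq : x - (a:ℝ)/q = ((q:ℝ)*x - a)/q := by field_simp
    rw [heq, abs_div, abs_of_pos hq0']
    rw [div_le_div_iff₀ hq0' (by positivity)]
    calc |(q:ℝ)*x - a| * ((q:ℝ) * ((2:ℝ)^(j*m+m+1) + 1))
        = (|(q:ℝ)*x - a| * ((2:ℝ)^(j*m+m+1) + 1)) * q := by ring
      _ ≤ 1 * q := by
          apply mul_le_mul_of_nonneg_right _ hq0'.le
          rw [← le_div_iff₀ hQ1] at *
          exact happrox
      _ = 1 * q := rfl
  by_cases hbig : (2:ℝ) ^ (j*m) ≤ (q:ℝ)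
  · refine ⟨a, q, hbig, hqleR, le_trans happ ?_⟩
    apply one_div_le_one_div_of_le (by positivity)
    calc (q:ℝ)^2 = q * q := sq (q:ℝ) ▸ rfl
      _ ≤ (q:ℝ) * ((2:ℝ)^(j*m+m+1) + 1) := by nlinarith
  · exfalso
    apply h
    have hqlt : q < 2 ^ (j*m) := by
      have : (q:ℝ) < (2:ℝ)^(j*m) := lt_of_not_ge hbig
      exact_mod_cast (by push_cast; exact this : (q:ℝ) < ((2^(j*m) : ℤ) : ℝ))
    have habs := abs_le.mp happrox
    have hsmall : 1/((2:ℝ)^(j*m+m+1) + 1) ≤ 1 := by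
      rw [div_le_one hQ1]; nlinarith [pow_pos (show (0:ℝ) < 2 by norm_num) (j*m+m+1)]
    have hql : (q:ℝ)*(n:ℝ) ≤ (q:ℝ)*x := mul_le_mul_of_nonneg_left hx1 hq0'.le
    have hqu : (q:ℝ)*x ≤ (q:ℝ)*((n:ℝ)+1) := (mul_le_mul_of_nonneg_left hx2.le hq0'.le)
    have hal : n * q - 1 ≤ a := by
      have : ((n*q - 1 : ℤ) : ℝ) ≤ (a:ℝ) := by push_cast; nlinarith [habs.2, hsmall]
      exact_mod_cast this
    have hau : a ≤ (n+1) * q + 1 := by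
      have : (a:ℝ) ≤ (((n+1)*q + 1 : ℤ) : ℝ) := by push_cast; nlinarith [habs.1, hsmall]
      exact_mod_cast this
    simp only [badSet, Set.mem_iUnion, Metric.mem_closedBall, exists_prop]
    refine ⟨q, Finset.mem_Ico.mpr ⟨hq0, hqlt⟩, a, Finset.mem_Icc.mpr ⟨hal, hau⟩, ?_⟩
    rw [Real.dist_eq]
    exact happ

lemma ae_good : ∀ᵐ x : ℝ, ∀ ε : ℝ, 0 < ε → ∃ N₀ : ℕ, ∀ N : ℕ, N₀ ≤ N →
    ∃ a q : ℤ, (N : ℝ) ≤ (q : ℝ) ∧ (q : ℝ) ≤ (N : ℝ) ^ ((1 : ℝ) + ε) ∧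
      |x - (a : ℝ) / (q : ℝ)| ≤ 1 / (q : ℝ) ^ 2 := by
  have H : ∀ᵐ x : ℝ, ∀ n : ℤ, ∀ j : ℕ, ∀ᶠ m in atTop, x ∉ badSet n j m := by
    rw [ae_all_iff]; intro n; rw [ae_all_iff]; intro j; exact badSet_ae n j
  filter_upwards [H] with x hx ε hε
  set n := ⌊x⌋ with hn
  obtain ⟨j, hj1, hjε⟩ : ∃ j : ℕ, 1 ≤ j ∧ 2 ≤ (j:ℝ) * ε := by
    refine ⟨max 1 ⌈2/ε⌉₊, le_max_left _ _, ?_⟩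
    have h1 : (2:ℝ)/ε ≤ (⌈2/ε⌉₊ : ℕ) := Nat.le_ceil _
    have h2 : ((⌈2/ε⌉₊:ℕ):ℝ) ≤ ((max 1 ⌈2/ε⌉₊ : ℕ):ℝ) := by exact_mod_cast le_max_right 1 ⌈2/ε⌉₊
    have := (div_le_iff₀ hε).mp (h1.trans h2)
    linarith
  obtain ⟨M, hM⟩ := eventually_atTop.1 (hx n j)
  set m₀ := max M (j + 2) with hm₀
  refine ⟨2 ^ (j * m₀) + 1, fun N hN => ?_⟩
  have hex : ∃ m, N ≤ 2 ^ (j * m) := by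
    refine ⟨N, (Nat.lt_two_pow_self (n := N)).le.trans (Nat.pow_le_pow_right (by norm_num) ?_)⟩
    exact Nat.le_mul_of_pos_left N hj1
  have hmspec : N ≤ 2 ^ (j * Nat.find hex) := Nat.find_spec hex
  have hm₀m : m₀ < Nat.find hex := by
    by_contra hcon
    push_neg at hcon
    have : N ≤ 2 ^ (j * m₀) :=
      hmspec.trans (Nat.pow_le_pow_right (by norm_num) (Nat.mul_le_mul_left j hcon))
    omega
  obtain ⟨m', hm'⟩ : ∃ m', Nat.find hex = m' + 1 := ⟨Nat.find hex - 1, by omega⟩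
  have hmin : ¬ N ≤ 2 ^ (j * m') := Nat.find_min hex (by omega)
  push_neg at hmin
  have hm'₀ : m₀ ≤ m' := by omega
  have hnotbad : x ∉ badSet n j (m' + 1) := hM _ (by omega)
  rw [hm'] at hmspec
  obtain ⟨a, q, hq1, hq2, hq3⟩ :=
    good_of_not_bad (Int.floor_le x) (Int.lt_floor_add_one x) j (m'+1) hnotbad
  refine ⟨a, q, ?_, ?_, hq3⟩
  · have hcast : (N:ℝ) ≤ (2:ℝ) ^ (j * (m'+1)) := by exact_mod_cast hmspec
    linarith
  · have hNlow : (2:ℝ) ^ (j * m') < (N:ℝ) := by exact_mod_cast hmin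
    have hm'j : (j:ℝ) + 2 ≤ (m':ℝ) := by
      exact_mod_cast le_trans (le_max_right M (j+2)) hm'₀
    have hjR : (1:ℝ) ≤ j := by exact_mod_cast hj1
    have hexp : ((j * (m'+1) + (m'+1) + 1 : ℕ) : ℝ) ≤ ((j * m' : ℕ) : ℝ) * (1 + ε) := by
      push_cast
      nlinarith [hjε, hm'j, hjR, hε.le]
    calc (q:ℝ) ≤ (2:ℝ) ^ (j*(m'+1)+(m'+1)+1) := hq2
      _ = (2:ℝ) ^ ((j*(m'+1)+(m'+1)+1 : ℕ) : ℝ) := (Real.rpow_natCast 2 _).symm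
      _ ≤ (2:ℝ) ^ (((j*m' : ℕ):ℝ) * (1+ε)) :=
          Real.rpow_le_rpow_of_exponent_le one_le_two hexp
      _ = ((2:ℝ) ^ (((j*m' : ℕ)):ℝ)) ^ ((1:ℝ)+ε) := Real.rpow_mul (by norm_num) _ _
      _ = ((2:ℝ) ^ (j*m' : ℕ)) ^ ((1:ℝ)+ε) := by rw [Real.rpow_natCast]
      _ ≤ (N:ℝ) ^ ((1:ℝ)+ε) := Real.rpow_le_rpow (by positivity) hNlow.le (by linarith)


/-- For almost every `t`: for every `ε > 0` and every sufficiently large integer `N`,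
there are integers `a`, `q` with `N ≤ q ≤ N^{1+ε}` and `|t/(2π) - a/q| ≤ 1/q²`. -/
theorem dirichlet_denominator_in_range :
    ∀ᵐ t : ℝ, ∀ ε : ℝ, 0 < ε → ∃ N₀ : ℕ, ∀ N : ℕ, N₀ ≤ N →
      ∃ a q : ℤ, (N : ℝ) ≤ (q : ℝ) ∧ (q : ℝ) ≤ (N : ℝ) ^ ((1 : ℝ) + ε) ∧
        |t / (2 * Real.pi) - (a : ℝ) / (q : ℝ)| ≤ 1 / (q : ℝ) ^ 2 := by
  have h := ae_good
  rw [ae_iff] at h ⊢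
  have h2π : ((2 * Real.pi)⁻¹ : ℝ) ≠ 0 := inv_ne_zero (by positivity)
  have hset : {t : ℝ | ¬ ∀ ε : ℝ, 0 < ε → ∃ N₀ : ℕ, ∀ N : ℕ, N₀ ≤ N →
      ∃ a q : ℤ, (N : ℝ) ≤ (q : ℝ) ∧ (q : ℝ) ≤ (N : ℝ) ^ ((1 : ℝ) + ε) ∧
        |t / (2 * Real.pi) - (a : ℝ) / (q : ℝ)| ≤ 1 / (q : ℝ) ^ 2}
      = ((2 * Real.pi)⁻¹ * ·) ⁻¹' {x : ℝ | ¬ ∀ ε : ℝ, 0 < ε → ∃ N₀ : ℕ, ∀ N : ℕ, N₀ ≤ N →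
      ∃ a q : ℤ, (N : ℝ) ≤ (q : ℝ) ∧ (q : ℝ) ≤ (N : ℝ) ^ ((1 : ℝ) + ε) ∧
        |x - (a : ℝ) / (q : ℝ)| ≤ 1 / (q : ℝ) ^ 2} := by
    ext t
    simp only [Set.mem_setOf_eq, Set.mem_preimage, div_eq_inv_mul]
  rw [hset, Real.volume_preimage_mul_left h2π, h, mul_zero]
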